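/- For α ∈ (0,1) and with Ω_m = −2^{α−1} Γ(1−α)/(Γ(1−α/2))² · (Γ(1+α/2)/Γ(2−α/2) − Γ(m+α/2)/Γ(1+m−α/2)) for any real m > 0, one has Ω_m + C(α)∫₀^{2π} cos(y)/(4sin²(y/2))^{α/2} dy = 2^{α−1} Γ(1−α)/(Γ(1−α/2))² · Γ(m+α/2)/Γ(1+m−α/2), and this quantity is nonzero for every real m > 0. -/

import Mathlib

open intervalIntegral Real MeasureTheory Set

lemma realBeta {u v : ℝ} (hu : 0 < u) (hv : 0 < v) :
    ∫ x in (0:ℝ)..1, x ^ (u - 1) * (1 - x) ^ (v - 1) =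
      Real.Gamma u * Real.Gamma v / Real.Gamma (u + v) := by
  have hbc : Complex.betaIntegral u v =
      ((∫ x in (0:ℝ)..1, x ^ (u - 1) * (1 - x) ^ (v - 1) : ℝ) : ℂ) := by
    rw [Complex.betaIntegral, ← intervalIntegral.integral_ofReal]
    refine intervalIntegral.integral_congr fun x hx => ?_
    rw [uIcc_of_le zero_le_one] at hx
    push_cast
    rw [Complex.ofReal_cpow hx.1, Complex.ofReal_cpow (by linarith [hx.2] : (0:ℝ) ≤ 1 - x)]
    push_cast
    ring
  have h := Complex.Gamma_mul_Gamma_eq_betaIntegral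
    (s := (u:ℂ)) (t := (v:ℂ)) (by simpa using hu) (by simpa using hv)
  rw [hbc, ← Complex.ofReal_add, Complex.Gamma_ofReal, Complex.Gamma_ofReal,
    Complex.Gamma_ofReal, ← Complex.ofReal_mul] at h
  have h2 : (Real.Gamma u * Real.Gamma v : ℝ) =
      Real.Gamma (u + v) * ∫ x in (0:ℝ)..1, x ^ (u - 1) * (1 - x) ^ (v - 1) := by
    exact_mod_cast h
  have hG : Real.Gamma (u + v) ≠ 0 := (Real.Gamma_pos_of_pos (by linarith)).ne'
  field_simp
  linarith [h2]

lemma hasDerivSin (y : ℝ) : HasDerivAt (fun y : ℝ => Real.sin (y/2) ^ 2)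
    (Real.sin (y/2) * Real.cos (y/2)) y := by
  have h := (((hasDerivAt_id y).div_const 2).sin).pow 2
  refine h.congr_deriv ?_
  norm_num
  ring

lemma strictMonoSin : StrictMonoOn (fun y : ℝ => Real.sin (y/2) ^ 2) (Ioo 0 π) := by
  intro x hx y hy hxy
  have hs := Real.strictMonoOn_sin (a := x/2) (b := y/2)
    ⟨by linarith [hx.1, Real.pi_pos], by linarith [hx.2]⟩
    ⟨by linarith [hy.1, Real.pi_pos], by linarith [hy.2]⟩ (by linarith)
  have hsx : 0 < Real.sin (x/2) :=
    Real.sin_pos_of_pos_of_lt_pi (by linarith [hx.1]) (by linarith [hx.2, Real.pi_pos])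
  simpa using pow_lt_pow_left₀ hs hsx.le (n := 2) (by norm_num)

lemma imageSin : (fun y : ℝ => Real.sin (y/2) ^ 2) '' Ioo 0 π = Ioo 0 1 := by
  ext x
  constructor
  · rintro ⟨y, hy, rfl⟩
    have h1 : 0 < Real.sin (y/2) :=
      Real.sin_pos_of_pos_of_lt_pi (by linarith [hy.1]) (by linarith [hy.2, Real.pi_pos])
    have hc : 0 < Real.cos (y/2) :=
      Real.cos_pos_of_mem_Ioo ⟨by linarith [hy.1, Real.pi_pos], by linarith [hy.2]⟩
    have hsq := Real.sin_sq_add_cos_sq (y/2)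
    exact ⟨pow_pos h1 2, by nlinarith⟩
  · intro hx
    refine ⟨2 * Real.arcsin (Real.sqrt x), ⟨?_, ?_⟩, ?_⟩
    · have : 0 < Real.arcsin (Real.sqrt x) :=
        Real.arcsin_pos.2 (Real.sqrt_pos.2 hx.1)
      linarith
    · have : Real.arcsin (Real.sqrt x) < π/2 :=
        Real.arcsin_lt_pi_div_two.2 (by
          rw [show (1:ℝ) = Real.sqrt 1 by simp]
          exact Real.sqrt_lt_sqrt hx.1.le hx.2)
      linarith
    · have h01 : Real.sqrt x ≤ 1 := by
        rw [show (1:ℝ) = Real.sqrt 1 by simp]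
        exact Real.sqrt_le_sqrt hx.2.le
      show Real.sin (2 * Real.arcsin (Real.sqrt x) / 2) ^ 2 = x
      rw [show 2 * Real.arcsin (Real.sqrt x) / 2 = Real.arcsin (Real.sqrt x) by ring,
        Real.sin_arcsin (by linarith [Real.sqrt_nonneg x]) h01, Real.sq_sqrt hx.1.le]

lemma sin_integrand_eq {s : ℝ} {y : ℝ} (hy : y ∈ Ioo 0 π) :
    |Real.sin (y/2) * Real.cos (y/2)| *
      ((Real.sin (y/2)^2) ^ ((1-s)/2 - 1) * (1 - Real.sin (y/2)^2) ^ ((1:ℝ)/2 - 1))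
    = (Real.sin (y/2)^2) ^ (-s/2) := by
  have h1 : 0 < Real.sin (y/2) :=
    Real.sin_pos_of_pos_of_lt_pi (by linarith [hy.1]) (by linarith [hy.2, Real.pi_pos])
  have hc : 0 < Real.cos (y/2) :=
    Real.cos_pos_of_mem_Ioo ⟨by linarith [hy.1, Real.pi_pos], by linarith [hy.2]⟩
  have hb2 : 1 - Real.sin (y/2)^2 = Real.cos (y/2)^2 := by
    nlinarith [Real.sin_sq_add_cos_sq (y/2)]
  have e1 : ((Real.sin (y/2))^2) ^ ((1-s)/2 - 1) = Real.sin (y/2) ^ (-1-s) := by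
    rw [← Real.rpow_natCast (Real.sin (y/2)) 2, ← Real.rpow_mul h1.le]
    congr 1; push_cast; ring
  have e2 : ((Real.cos (y/2))^2) ^ ((1:ℝ)/2 - 1) = (Real.cos (y/2)) ^ (-1 : ℝ) := by
    rw [← Real.rpow_natCast (Real.cos (y/2)) 2, ← Real.rpow_mul hc.le]
    congr 1; push_cast; ring
  have e3 : ((Real.sin (y/2))^2) ^ (-s/2) = Real.sin (y/2) ^ (-s) := by
    rw [← Real.rpow_natCast (Real.sin (y/2)) 2, ← Real.rpow_mul h1.le]
    congr 1; push_cast; ring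
  rw [hb2, abs_of_pos (by positivity), e1, e2, e3,
    show (-s) = 1 + (-1-s) by ring, Real.rpow_add h1, Real.rpow_one,
    Real.rpow_neg_one]
  field_simp

lemma subst_eq (s : ℝ) :
    ∫ y in Ioo (0:ℝ) π, (Real.sin (y/2)^2) ^ (-s/2) =
      ∫ x in Ioo (0:ℝ) 1, x ^ ((1-s)/2 - 1) * (1-x) ^ ((1:ℝ)/2 - 1) := by
  rw [← imageSin, integral_image_eq_integral_abs_deriv_smul measurableSet_Ioo
      (fun x _ => (hasDerivSin x).hasDerivWithinAt) strictMonoSin.injOn]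
  refine (setIntegral_congr_fun measurableSet_Ioo fun y hy => ?_).symm
  simpa [smul_eq_mul] using (sin_integrand_eq (s := s) hy)

lemma beta_integrableOn {s : ℝ} (hs : s < 1) :
    IntegrableOn (fun x : ℝ => x ^ ((1-s)/2 - 1) * (1-x) ^ ((1:ℝ)/2 - 1)) (Ioo 0 1) := by
  have hc := (Complex.betaIntegral_convergent
      (u := (((1-s)/2 : ℝ) : ℂ)) (v := (((1:ℝ)/2 : ℝ) : ℂ))
      (by simp; linarith) (by norm_num)).1
  have : IntegrableOn (fun x : ℝ => ((x:ℂ) ^ ((((1-s)/2 : ℝ):ℂ) - 1) * (1 - (x:ℂ)) ^ ((((1:ℝ)/2 : ℝ):ℂ) - 1)).re) (Ioo 0 1) := MeasureTheory.IntegrableOn.mono_set hc.re Ioo_subset_Ioc_self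
  refine this.congr_fun (fun x hx => ?_) measurableSet_Ioo
  dsimp only
  rw [show (((1-s)/2 : ℝ):ℂ) - 1 = (((1-s)/2 - 1 : ℝ):ℂ) by push_cast; ring,
    show (((1:ℝ)/2 : ℝ):ℂ) - 1 = (((1:ℝ)/2 - 1 : ℝ):ℂ) by push_cast; ring,
    show ((1:ℂ) - (x:ℂ)) = (((1 - x : ℝ)):ℂ) by push_cast; ring,
    ← Complex.ofReal_cpow hx.1.le, ← Complex.ofReal_cpow (by linarith [hx.2] : (0:ℝ) ≤ 1 - x)]
  rw [← Complex.ofReal_mul, Complex.ofReal_re]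

lemma sin_integrableOn {s : ℝ} (hs : s < 1) :
    IntegrableOn (fun y => (Real.sin (y/2)^2) ^ (-s/2)) (Ioo 0 π) := by
  have hb := beta_integrableOn hs
  rw [← imageSin, integrableOn_image_iff_integrableOn_abs_deriv_smul measurableSet_Ioo
      (fun x _ => (hasDerivSin x).hasDerivWithinAt) strictMonoSin.injOn] at hb
  refine hb.congr_fun (fun y hy => ?_) measurableSet_Ioo
  simpa [smul_eq_mul] using sin_integrand_eq (s := s) hy

lemma J_half_val {s : ℝ} (hs : s < 1) :
    ∫ y in (0:ℝ)..π, (Real.sin (y/2)^2) ^ (-s/2) =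
      Real.Gamma ((1-s)/2) * Real.Gamma (1/2) / Real.Gamma ((1-s)/2 + 1/2) := by
  rw [integral_of_le Real.pi_pos.le, MeasureTheory.integral_Ioc_eq_integral_Ioo, subst_eq,
    ← realBeta (by linarith : (0:ℝ) < (1-s)/2) (by norm_num : (0:ℝ) < (1:ℝ)/2),
    integral_of_le zero_le_one, MeasureTheory.integral_Ioc_eq_integral_Ioo]

lemma J_half_ii {s : ℝ} (hs : s < 1) :
    IntervalIntegrable (fun y => (Real.sin (y/2)^2) ^ (-s/2)) volume 0 π := by
  rw [intervalIntegrable_iff_integrableOn_Ioo_of_le Real.pi_pos.le]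
  exact sin_integrableOn hs

lemma sin_symm (s : ℝ) :
    (fun x : ℝ => (Real.sin ((2*π - x)/2)^2) ^ (-s/2)) =
      (fun x : ℝ => (Real.sin (x/2)^2) ^ (-s/2)) := by
  funext x
  rw [show (2*π - x)/2 = π - x/2 by ring, Real.sin_pi_sub]

lemma ii_symm {s : ℝ} (hs : s < 1) :
    IntervalIntegrable (fun y => (Real.sin (y/2)^2) ^ (-s/2)) volume π (2*π) := by
  have i2 := (J_half_ii hs).comp_sub_left (2*π)
  rw [sin_symm] at i2
  simpa [show 2*π - π = π by ring] using i2.symm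

lemma J_two_ii {s : ℝ} (hs : s < 1) :
    IntervalIntegrable (fun y => (Real.sin (y/2)^2) ^ (-s/2)) volume 0 (2*π) :=
  (J_half_ii hs).trans (ii_symm hs)

lemma J_symm (s : ℝ) :
    (∫ y in π..(2*π), (Real.sin (y/2)^2) ^ (-s/2)) =
      ∫ y in (0:ℝ)..π, (Real.sin (y/2)^2) ^ (-s/2) := by
  have h := intervalIntegral.integral_comp_sub_left (a := 0) (b := π)
    (fun y : ℝ => (Real.sin (y/2)^2) ^ (-s/2)) (2*π)
  rw [show 2*π - π = π by ring, sub_zero] at h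
  rw [← h]
  refine intervalIntegral.integral_congr fun x _ => ?_
  show (Real.sin ((2*π - x)/2)^2) ^ (-s/2) = (Real.sin (x/2)^2) ^ (-s/2)
  rw [show (2*π - x)/2 = π - x/2 by ring, Real.sin_pi_sub]

lemma J_two_val {s : ℝ} (hs : s < 1) :
    ∫ y in (0:ℝ)..(2*π), (Real.sin (y/2)^2) ^ (-s/2) =
      2 * (Real.Gamma ((1-s)/2) * Real.Gamma (1/2) / Real.Gamma ((1-s)/2 + 1/2)) := by
  rw [← intervalIntegral.integral_add_adjacent_intervals (J_half_ii hs) (ii_symm hs),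
    J_symm s, J_half_val hs]
  ring

lemma four_pull (s : ℝ) :
    (fun y : ℝ => (4 * Real.sin (y/2)^2) ^ (-s/2)) =
      (fun y : ℝ => (2:ℝ)^(-s) * (Real.sin (y/2)^2) ^ (-s/2)) := by
  funext y
  rw [Real.mul_rpow (by norm_num) (sq_nonneg _)]
  congr 1
  rw [show (4:ℝ) = (2:ℝ)^(2:ℕ) by norm_num, ← Real.rpow_natCast (2:ℝ) 2,
    ← Real.rpow_mul (by norm_num)]
  congr 1
  push_cast
  ring

lemma J4_ii {s : ℝ} (hs : s < 1) :
    IntervalIntegrable (fun y : ℝ => (4 * Real.sin (y/2)^2) ^ (-s/2)) volume 0 (2*π) := by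
  rw [four_pull]
  exact (J_two_ii hs).const_mul _

lemma J4_val {s : ℝ} (hs : s < 1) :
    ∫ y in (0:ℝ)..(2*π), (4 * Real.sin (y/2)^2) ^ (-s/2) =
      (2:ℝ)^(1-s) * (Real.Gamma ((1-s)/2) * Real.Gamma (1/2) / Real.Gamma ((1-s)/2 + 1/2)) := by
  rw [four_pull, intervalIntegral.integral_const_mul, J_two_val hs,
    show (1:ℝ) - s = 1 + (-s) by ring, Real.rpow_add (by norm_num) 1 (-s), Real.rpow_one]
  ring

lemma integrand_split {α : ℝ} (h0 : 0 < α) (h1 : α < 1) (y : ℝ) :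
    Real.cos y / (4 * Real.sin (y/2)^2) ^ (α/2) =
      (4 * Real.sin (y/2)^2) ^ (-α/2) - (1/2) * (4 * Real.sin (y/2)^2) ^ (-(α-2)/2) := by
  rcases eq_or_ne (Real.sin (y/2)) 0 with h | h
  · rw [h, show (4:ℝ) * (0:ℝ)^2 = 0 by ring,
      Real.zero_rpow (show (0:ℝ) < α/2 by linarith).ne',
      Real.zero_rpow (show -α/2 < 0 by linarith).ne,
      Real.zero_rpow (show (0:ℝ) < -(α-2)/2 by linarith).ne', div_zero]
    ring
  · have hx : 0 < 4 * Real.sin (y/2)^2 := by positivity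
    set X := 4 * Real.sin (y/2)^2 with hX
    have hcos : Real.cos y = 1 - X/2 := by
      have h2 := Real.cos_two_mul (y/2)
      have h3 := Real.sin_sq_add_cos_sq (y/2)
      rw [show 2*(y/2) = y by ring] at h2
      rw [hX]
      linarith
    have hne : X ^ (α/2) ≠ 0 := (Real.rpow_pos_of_pos hx _).ne'
    rw [hcos, show -(α-2)/2 = 1 + (-(α/2)) by ring, Real.rpow_add hx, Real.rpow_one,
      neg_div, Real.rpow_neg hx.le, div_eq_mul_inv]
    ring
set_option maxHeartbeats 2000000 in
theorem omega_plus_integral (α : ℝ) (h0 : 0 < α) (h1 : α < 1) (m : ℝ) (hm : 0 < m) :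
    (-2 ^ (α - 1) * Real.Gamma (1 - α) / (Real.Gamma (1 - α / 2)) ^ 2 *
        (Real.Gamma (1 + α / 2) / Real.Gamma (2 - α / 2) -
          Real.Gamma (m + α / 2) / Real.Gamma (1 + m - α / 2))) +
      ((1 / (2 * Real.pi)) * Real.Gamma (α / 2) / (2 ^ (1 - α) * Real.Gamma ((2 - α) / 2))) *
        (∫ y in (0:ℝ)..(2 * Real.pi),
          Real.cos y / (4 * Real.sin (y / 2) ^ 2) ^ (α / 2))
      = 2 ^ (α - 1) * Real.Gamma (1 - α) / (Real.Gamma (1 - α / 2)) ^ 2 *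
          (Real.Gamma (m + α / 2) / Real.Gamma (1 + m - α / 2)) ∧
    2 ^ (α - 1) * Real.Gamma (1 - α) / (Real.Gamma (1 - α / 2)) ^ 2 *
          (Real.Gamma (m + α / 2) / Real.Gamma (1 + m - α / 2)) ≠ 0 := by
  have g1 : 0 < Real.Gamma (1 - α) := Real.Gamma_pos_of_pos (by linarith)
  have g2 : 0 < Real.Gamma (1 - α/2) := Real.Gamma_pos_of_pos (by linarith)
  have g3 : 0 < Real.Gamma (m + α/2) := Real.Gamma_pos_of_pos (by linarith)
  have g4 : 0 < Real.Gamma (1 + m - α/2) := Real.Gamma_pos_of_pos (by linarith)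
  have g5 : 0 < Real.Gamma (α/2) := Real.Gamma_pos_of_pos (by linarith)
  constructor
  · have hs2 : α - 2 < 1 := by linarith
    have hne1 : (1-α)/2 ≠ 0 := (by linarith : (0:ℝ) < (1-α)/2).ne'
    have hne2 : 1 - α/2 ≠ 0 := (by linarith : (0:ℝ) < 1 - α/2).ne'
    have hne3 : α/2 ≠ 0 := (by linarith : (0:ℝ) < α/2).ne'
    have hc2 : (2:ℝ) - α ≠ 0 := by linarith
    have ht : (2:ℝ)^α ≠ 0 := (Real.rpow_pos_of_pos two_pos α).ne'
    have hB := g2.ne'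
    have h2a : (2:ℝ)^((1:ℝ)-α) = 2/(2:ℝ)^α := by
      rw [Real.rpow_sub two_pos, Real.rpow_one]
    have h2b : (2:ℝ)^(α-1) = (2:ℝ)^α/2 := by
      rw [Real.rpow_sub two_pos, Real.rpow_one]
    have h2c : (2:ℝ)^((1:ℝ)-(α-2)) = 8/(2:ℝ)^α := by
      rw [show (1:ℝ)-(α-2) = 3 - α by ring, Real.rpow_sub two_pos,
        show (3:ℝ) = ((3:ℕ):ℝ) by norm_num, Real.rpow_natCast]
      norm_num
    set q := Real.sqrt π with hqdef
    have hq2 : q^2 = π := Real.sq_sqrt Real.pi_pos.le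
    have hqne : q ≠ 0 := by
      rw [hqdef]; positivity
    have hd := Real.Gamma_mul_Gamma_add_half ((1-α)/2)
    rw [show 1 - 2*((1-α)/2) = α by ring, show 2*((1-α)/2) = 1-α by ring,
      show (1-α)/2 + 1/2 = 1 - α/2 by ring] at hd
    have hdup : Real.Gamma ((1-α)/2)
        = Real.Gamma (1-α) * (2:ℝ)^α * q / Real.Gamma (1-α/2) := by
      rw [eq_div_iff g2.ne', ← hd]
    have hIsplit : (∫ y in (0:ℝ)..(2*π), Real.cos y / (4*Real.sin (y/2)^2)^(α/2))
        = (∫ y in (0:ℝ)..(2*π), (4*Real.sin (y/2)^2)^(-α/2))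
          - (1/2) * ∫ y in (0:ℝ)..(2*π), (4*Real.sin (y/2)^2)^(-(α-2)/2) := by
      rw [intervalIntegral.integral_congr
          (g := fun y => (4*Real.sin (y/2)^2)^(-α/2)
            - (1/2) * (4*Real.sin (y/2)^2)^(-(α-2)/2))
          (fun y _ => integrand_split h0 h1 y),
        intervalIntegral.integral_sub (J4_ii h1) ((J4_ii hs2).const_mul (1/2)),
        intervalIntegral.integral_const_mul]
    have hIval : (∫ y in (0:ℝ)..(2*π), Real.cos y / (4*Real.sin (y/2)^2)^(α/2))
        = α * Real.Gamma (1-α) * q^2 / ((1-α/2) * Real.Gamma (1-α/2)^2) := by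
      rw [hIsplit, J4_val h1, J4_val hs2,
        show (1-(α-2))/2 + 1/2 = (1 - α/2) + 1 by ring, Real.Gamma_add_one hne2,
        show (1-(α-2))/2 = (1-α)/2 + 1 by ring, Real.Gamma_add_one hne1,
        show (1-α)/2 + 1/2 = 1 - α/2 by ring,
        Real.Gamma_one_half_eq, ← hqdef, hdup, h2a, h2c]
      set GA := Real.Gamma (1-α)
      set GB := Real.Gamma (1-α/2)
      field_simp
      ring
    have key : (1 / (2 * π)) * Real.Gamma (α / 2) / (2 ^ (1 - α) * Real.Gamma ((2 - α) / 2)) *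
        (∫ y in (0:ℝ)..(2 * π), Real.cos y / (4 * Real.sin (y / 2) ^ 2) ^ (α / 2))
        = 2 ^ (α - 1) * Real.Gamma (1 - α) / (Real.Gamma (1 - α / 2)) ^ 2 *
          (Real.Gamma (1 + α / 2) / Real.Gamma (2 - α / 2)) := by
      rw [show (2-α)/2 = 1 - α/2 by ring,
        show 1 + α/2 = α/2 + 1 by ring, Real.Gamma_add_one hne3,
        show 2 - α/2 = (1 - α/2) + 1 by ring, Real.Gamma_add_one hne2,
        h2a, h2b, show (1:ℝ) / (2 * π) = 1 / (2 * q^2) by rw [hq2]]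
      rw [hIval]
      set GA := Real.Gamma (1-α)
      set GB := Real.Gamma (1-α/2)
      set GC := Real.Gamma (α/2)
      field_simp
    linear_combination key
  · have h2 : (0:ℝ) < 2^(α-1) := Real.rpow_pos_of_pos two_pos _
    positivity
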